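/- Let T be a finite tree with positive vertex weights and positive edge lengths, and for each edge e = (u,v) define g(e) = max{ r(T_u(v)), r(T_v(u)) }, where r(S) = min over points x of the subtree S of max_{v∈S} w(v)·d(x,v) is the weighted radius. If e* = (u*,v*) minimizes g over all edges, then the union of a weighted 1-center of T_{u*}(v*) and a weighted 1-center of T_{v*}(u*) is a weighted 2-center of T, i.e., a 2-point set X ⊆ T minimizing max_{v∈V} w(v)·d(X,v). -/

import Mathlib

set_option linter.unusedVariables false
set_option linter.unusedSectionVars false


/-- Length of a walk with respect to edge lengths `ℓ`. -/
def walkLength {V : Type*} {G : SimpleGraph V} (ℓ : V → V → ℝ) :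
    ∀ {u v : V}, G.Walk u v → ℝ :=
  fun p => (p.darts.map fun d => ℓ d.toProd.1 d.toProd.2).sum

/-- Shortest-path distance between vertices of `G` with edge lengths `ℓ`. -/
noncomputable def vdist {V : Type*} (G : SimpleGraph V) (ℓ : V → V → ℝ) (u v : V) : ℝ :=
  sInf {x | ∃ p : G.Walk u v, x = walkLength ℓ p}

section basic
variable {V : Type*} {G : SimpleGraph V} {ℓ : V → V → ℝ}

lemma wl_nil {u : V} : walkLength ℓ (SimpleGraph.Walk.nil : G.Walk u u) = 0 := by
  simp [walkLength]

lemma wl_cons {u v z : V} (h : G.Adj u v) (p : G.Walk v z) :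
    walkLength ℓ (SimpleGraph.Walk.cons h p) = ℓ u v + walkLength ℓ p := by
  simp [walkLength]

lemma wl_append {u v z : V} (p : G.Walk u v) (q : G.Walk v z) :
    walkLength ℓ (p.append q) = walkLength ℓ p + walkLength ℓ q := by
  simp [walkLength, SimpleGraph.Walk.darts_append]

lemma wl_nonneg (hℓnn : ∀ u v, 0 ≤ ℓ u v) {u v : V} (p : G.Walk u v) :
    0 ≤ walkLength ℓ p := by
  apply List.sum_nonneg
  intro x hx
  simp only [List.mem_map] at hx
  obtain ⟨d, _, rfl⟩ := hx
  exact hℓnn _ _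

lemma wl_reverse (hℓsym : ∀ u v, ℓ u v = ℓ v u) {u v : V} (p : G.Walk u v) :
    walkLength ℓ p.reverse = walkLength ℓ p := by
  unfold walkLength
  rw [SimpleGraph.Walk.darts_reverse, List.map_reverse, List.sum_reverse, List.map_map]
  congr 1
  apply List.map_congr_left
  intro d _
  simp [SimpleGraph.Dart.symm, hℓsym]

variable (hconn : G.Connected) (hℓnn : ∀ u v, 0 ≤ ℓ u v)
include hconn hℓnn

lemma vdist_set_nonempty (u v : V) :
    {x | ∃ p : G.Walk u v, x = walkLength ℓ p}.Nonempty := by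
  obtain ⟨p⟩ := hconn.preconnected u v
  exact ⟨walkLength ℓ p, p, rfl⟩

lemma vdist_set_bddBelow (u v : V) :
    BddBelow {x | ∃ p : G.Walk u v, x = walkLength ℓ p} := by
  refine ⟨0, ?_⟩
  rintro x ⟨p, rfl⟩
  exact wl_nonneg hℓnn p

lemma vdist_le_wl {u v : V} (p : G.Walk u v) : vdist G ℓ u v ≤ walkLength ℓ p :=
  csInf_le (vdist_set_bddBelow hconn hℓnn u v) ⟨p, rfl⟩

lemma le_vdist {u v : V} {c : ℝ} (h : ∀ p : G.Walk u v, c ≤ walkLength ℓ p) :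
    c ≤ vdist G ℓ u v :=
  le_csInf (vdist_set_nonempty hconn hℓnn u v) (by rintro x ⟨p, rfl⟩; exact h p)

lemma vdist_nonneg (u v : V) : 0 ≤ vdist G ℓ u v :=
  le_vdist hconn hℓnn (fun p => wl_nonneg hℓnn p)

lemma vdist_self (u : V) : vdist G ℓ u u = 0 :=
  le_antisymm (by simpa [wl_nil] using vdist_le_wl hconn hℓnn (SimpleGraph.Walk.nil : G.Walk u u))
    (vdist_nonneg hconn hℓnn u u)

lemma vdist_edge_le {u v : V} (h : G.Adj u v) : vdist G ℓ u v ≤ ℓ u v := by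
  simpa [wl_cons, wl_nil] using vdist_le_wl hconn hℓnn (SimpleGraph.Walk.cons h SimpleGraph.Walk.nil)

lemma vdist_triangle (u v z : V) :
    vdist G ℓ u z ≤ vdist G ℓ u v + vdist G ℓ v z := by
  have h1 : ∀ p : G.Walk u v, vdist G ℓ u z ≤ walkLength ℓ p + vdist G ℓ v z := by
    intro p
    have h2 : vdist G ℓ u z - walkLength ℓ p ≤ vdist G ℓ v z := by
      apply le_vdist hconn hℓnn
      intro q
      have := vdist_le_wl (G := G) hconn hℓnn (p.append q)
      rw [wl_append] at this
      linarith
    linarith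
  have h3 : vdist G ℓ u z - vdist G ℓ v z ≤ vdist G ℓ u v := by
    apply le_vdist hconn hℓnn
    intro p
    have := h1 p
    linarith
  linarith

lemma vdist_symm (hℓsym : ∀ u v, ℓ u v = ℓ v u) (u v : V) :
    vdist G ℓ u v = vdist G ℓ v u := by
  have key : ∀ a b : V, vdist G ℓ a b ≤ vdist G ℓ b a := by
    intro a b
    apply le_vdist hconn hℓnn
    intro p
    have := vdist_le_wl (G := G) hconn hℓnn p.reverse
    rwa [wl_reverse hℓsym] at this
  exact le_antisymm (key u v) (key v u)

end basic

/-- Distance from the point on edge `(u,v)` at parameter `s ∈ [0,1]` to vertex `z`. -/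
noncomputable def pdist {V : Type*} (G : SimpleGraph V) (ℓ : V → V → ℝ)
    (u v : V) (s : ℝ) (z : V) : ℝ :=
  min (s * ℓ u v + vdist G ℓ u z) ((1 - s) * ℓ u v + vdist G ℓ v z)

/-- The vertices of the connected component of `G - v` containing `t`. -/
def branch {V : Type*} (G : SimpleGraph V) (v t : V) : Set V :=
  {u | ∃ p : G.Walk t u, v ∉ p.support}

section branch
open SimpleGraph
variable {V : Type*} [DecidableEq V] {G : SimpleGraph V} (hG : G.IsTree)

lemma branch_self {u v : V} (h : u ≠ v) : u ∈ branch G v u :=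
  ⟨Walk.nil, by simp [Ne.symm h]⟩

lemma branch_not_self (u v : V) : v ∉ branch G v u := by
  rintro ⟨p, hp⟩
  exact hp p.end_mem_support

lemma branch_ne {u v z : V} (hz : z ∈ branch G v u) : z ≠ v := by
  rintro rfl
  exact branch_not_self _ _ hz

lemma branch_extend {u v z y : V} (hz : z ∈ branch G v u) (h : G.Adj z y) (hy : y ≠ v) :
    y ∈ branch G v u := by
  obtain ⟨p, hp⟩ := hz
  refine ⟨p.append (Walk.cons h Walk.nil), ?_⟩
  rw [Walk.support_append]
  simp [hp, Ne.symm hy]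

include hG

lemma path_unique {α β : V} (p q : G.Walk α β) (hp : p.IsPath) (hq : q.IsPath) : p = q :=
  (hG.existsUnique_path α β).unique hp hq

lemma branch_walk_avoid {u v α β : V} (hα : α ∈ branch G v u) (hβ : β ∈ branch G v u) :
    ∃ q : G.Walk α β, q.IsPath ∧ v ∉ q.support := by
  obtain ⟨p1, hp1⟩ := hα
  obtain ⟨p2, hp2⟩ := hβ
  refine ⟨(p1.reverse.append p2).bypass, Walk.bypass_isPath _, fun hv => ?_⟩
  have := Walk.support_bypass_subset _ hv
  rw [Walk.mem_support_append_iff] at this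
  rcases this with h | h
  · rw [Walk.support_reverse, List.mem_reverse] at h
    exact hp1 h
  · exact hp2 h

lemma branch_path_avoid {u v α β : V} (hα : α ∈ branch G v u) (hβ : β ∈ branch G v u)
    (p : G.Walk α β) (hp : p.IsPath) : v ∉ p.support := by
  obtain ⟨q, hq, hqv⟩ := branch_walk_avoid hG hα hβ
  rwa [path_unique hG p q hp hq]

lemma branch_crossing {u v a b : V} (hadj : G.Adj u v) (ha : a ∈ branch G v u)
    (hb : b ∉ branch G v u) (hab : G.Adj a b) : b = v ∧ a = u := by
  have hbv : b = v := by
    by_contra hne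
    exact hb (branch_extend ha hab hne)
  subst hbv
  refine ⟨rfl, ?_⟩
  by_contra hne
  have hav : a ≠ b := hab.ne
  obtain ⟨p1, hp1⟩ := ha
  have hP1 : (p1.bypass : G.Walk u a).IsPath := Walk.bypass_isPath _
  have hP1v : b ∉ p1.bypass.support := fun hv => hp1 (Walk.support_bypass_subset _ hv)
  have hP2 : (Walk.cons hadj (Walk.cons hab.symm Walk.nil) : G.Walk u a).IsPath := by
    simp [Walk.isPath_def, List.nodup_cons, hadj.ne, Ne.symm hne, Ne.symm hav]
  have := path_unique hG p1.bypass _ hP1 hP2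
  rw [this] at hP1v
  simp at hP1v

lemma branch_disjoint {u v z : V} (hadj : G.Adj u v) (hz1 : z ∈ branch G v u)
    (hz2 : z ∈ branch G u v) : False := by
  have hzu : z ≠ u := branch_ne hz2
  obtain ⟨p1, hp1⟩ := hz1
  obtain ⟨p2, hp2⟩ := hz2
  have hP1 : (p1.bypass : G.Walk u z).IsPath := Walk.bypass_isPath _
  have hP1v : v ∉ p1.bypass.support := fun hv => hp1 (Walk.support_bypass_subset _ hv)
  have hP2u : u ∉ p2.bypass.support := fun hu => hp2 (Walk.support_bypass_subset _ hu)
  have hP2 : (Walk.cons hadj p2.bypass : G.Walk u z).IsPath :=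
    (Walk.bypass_isPath _).cons hP2u
  have := path_unique hG p1.bypass _ hP1 hP2
  rw [this] at hP1v
  simp at hP1v

lemma branch_union {u v : V} (hadj : G.Adj u v) (z : V) :
    z ∈ branch G v u ∨ z ∈ branch G u v := by
  obtain ⟨p0⟩ := hG.isConnected.preconnected u z
  set p := p0.bypass with hp
  have hpath : p.IsPath := Walk.bypass_isPath _
  by_cases hv : v ∈ p.support
  · right
    refine ⟨p.dropUntil v hv, fun hu => ?_⟩
    have hspec := Walk.take_spec p hv
    have hnodup : p.support.Nodup := hpath.support_nodup
    have hsupp : p.support = (p.takeUntil v hv).support ++ (p.dropUntil v hv).support.tail := by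
      rw [← Walk.support_append, hspec]
    rw [hsupp] at hnodup
    have hdisj := (List.nodup_append.mp hnodup).2.2
    have hu1 : u ∈ (p.takeUntil v hv).support := Walk.start_mem_support _
    have hu2 : u ∈ (p.dropUntil v hv).support.tail := by
      have := Walk.support_eq_cons (p.dropUntil v hv)
      rw [this, List.mem_cons] at hu
      rcases hu with h | h
      · exact absurd h hadj.ne
      · exact h
    exact hdisj u hu1 u hu2 rfl
  · exact Or.inl ⟨p, hv⟩

end branch

/-- `(a, b, s)` represents a point of the geometric realization of the subtree on the
vertex set `S`: either a point of an edge of `S` or a vertex of `S`. -/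
def IsPointOn {V : Type*} (G : SimpleGraph V) (S : Set V) (a b : V) (s : ℝ) : Prop :=
  a ∈ S ∧ b ∈ S ∧ ((G.Adj a b ∧ s ∈ Set.Icc (0:ℝ) 1) ∨ (a = b ∧ s = 0))

section split
open SimpleGraph
variable {V : Type*} [DecidableEq V] {G : SimpleGraph V} {ℓ : V → V → ℝ}
  (hG : G.IsTree) (hℓnn : ∀ u v, 0 ≤ ℓ u v) (hℓsym : ∀ u v, ℓ u v = ℓ v u)
include hG hℓnn

lemma walk_cross_ge {u v z : V} (hadj : G.Adj u v) (hz : z ∈ branch G v u) :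
    ∀ {y : V} (p : G.Walk y z), y ∉ branch G v u →
      vdist G ℓ y u + vdist G ℓ u z ≤ walkLength ℓ p := by
  intro y p
  induction p with
  | nil => intro hy; exact absurd hz hy
  | @cons a c _ h q ih =>
    intro hy
    by_cases hc : c ∈ branch G v u
    · obtain ⟨hav, hcu⟩ := branch_crossing hG hadj hc hy h.symm
      subst hcu
      have h1 : vdist G ℓ a c ≤ ℓ a c := vdist_edge_le hG.isConnected hℓnn h
      have h2 := vdist_le_wl hG.isConnected hℓnn q
      rw [wl_cons]
      linarith
    · have hih := ih hz hc
      have h1 : vdist G ℓ a u ≤ ℓ a c + vdist G ℓ c u := by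
        have := vdist_triangle hG.isConnected hℓnn a c u
        have := vdist_edge_le hG.isConnected hℓnn h
        linarith
      rw [wl_cons]
      linarith

lemma vdist_split {u v z y : V} (hadj : G.Adj u v) (hz : z ∈ branch G v u)
    (hy : y ∉ branch G v u) : vdist G ℓ y z = vdist G ℓ y u + vdist G ℓ u z := by
  refine le_antisymm (vdist_triangle hG.isConnected hℓnn y u z) ?_
  exact le_vdist hG.isConnected hℓnn (fun p => walk_cross_ge hG hℓnn hadj hz p hy)

omit hG
lemma pdist_nonneg {a b z : V} {s : ℝ} (hconn : G.Connected) (h0 : 0 ≤ s) (h1 : s ≤ 1) :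
    0 ≤ pdist G ℓ a b s z := by
  apply le_min
  · exact add_nonneg (mul_nonneg h0 (hℓnn _ _)) (vdist_nonneg hconn hℓnn _ _)
  · exact add_nonneg (mul_nonneg (by linarith) (hℓnn _ _)) (vdist_nonneg hconn hℓnn _ _)

lemma pdist_le_add (hconn : G.Connected) (a b : V) (s : ℝ) (y z : V) :
    pdist G ℓ a b s z ≤ pdist G ℓ a b s y + vdist G ℓ y z := by
  unfold pdist
  rw [← min_add_add_right]
  apply min_le_min
  · have := vdist_triangle hconn hℓnn a y z; linarith
  · have := vdist_triangle hconn hℓnn b y z; linarith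

lemma pdist_vertex (hconn : G.Connected) (u z : V) :
    pdist G ℓ u u 0 z = vdist G ℓ u z := by
  unfold pdist
  norm_num
  exact hℓnn u u

include hG

/-- endpoints of a point with not both ends in the branch are `= u` or outside. -/
lemma point_endpoint_cases {u v a b : V} {s : ℝ} (hadj : G.Adj u v)
    (hx : IsPointOn G Set.univ a b s)
    (hnot : ¬(a ∈ branch G v u ∧ b ∈ branch G v u)) :
    (a ∉ branch G v u ∨ a = u) ∧ (b ∉ branch G v u ∨ b = u) := by
  rcases hx.2.2 with ⟨hab, _⟩ | ⟨rfl, _⟩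
  · constructor
    · by_cases ha : a ∈ branch G v u
      · have hb : b ∉ branch G v u := fun hb => hnot ⟨ha, hb⟩
        exact Or.inr (branch_crossing hG hadj ha hb hab).2
      · exact Or.inl ha
    · by_cases hb : b ∈ branch G v u
      · have ha : a ∉ branch G v u := fun ha => hnot ⟨ha, hb⟩
        exact Or.inr (branch_crossing hG hadj hb ha hab.symm).2
      · exact Or.inl hb
  · have : a ∉ branch G v u := fun ha => hnot ⟨ha, ha⟩
    exact ⟨Or.inl this, Or.inl this⟩

lemma pdist_factor {u v a b z : V} {s : ℝ} (hadj : G.Adj u v)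
    (hx : IsPointOn G Set.univ a b s)
    (hnot : ¬(a ∈ branch G v u ∧ b ∈ branch G v u)) (hz : z ∈ branch G v u) :
    pdist G ℓ a b s z = pdist G ℓ a b s u + vdist G ℓ u z := by
  obtain ⟨hA, hB⟩ := point_endpoint_cases hG hℓnn hadj hx hnot
  have ea : vdist G ℓ a z = vdist G ℓ a u + vdist G ℓ u z := by
    rcases hA with h | rfl
    · exact vdist_split hG hℓnn hadj hz h
    · rw [vdist_self hG.isConnected hℓnn]; ring
  have eb : vdist G ℓ b z = vdist G ℓ b u + vdist G ℓ u z := by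
    rcases hB with h | rfl
    · exact vdist_split hG hℓnn hadj hz h
    · rw [vdist_self hG.isConnected hℓnn]; ring
  unfold pdist
  rw [ea, eb]
  simp only [← add_assoc]
  rw [min_add_add_right]

lemma pdist_gate {u v a b z : V} {s : ℝ} (hadj : G.Adj u v)
    (hx : IsPointOn G Set.univ a b s)
    (hnot : ¬(a ∈ branch G v u ∧ b ∈ branch G v u)) (hz : z ∈ branch G v u)
    (h0 : 0 ≤ s) (h1 : s ≤ 1) :
    vdist G ℓ u z ≤ pdist G ℓ a b s z := by
  rw [pdist_factor hG hℓnn hadj hx hnot hz]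
  exact le_add_of_nonneg_left (pdist_nonneg hℓnn hG.isConnected h0 h1)

include hℓsym

lemma pdist_out {u v a b y : V} {s : ℝ} (hadj : G.Adj u v)
    (hin : a ∈ branch G v u ∧ b ∈ branch G v u) (hy : y ∉ branch G v u) :
    pdist G ℓ a b s y = vdist G ℓ y u + pdist G ℓ a b s u := by
  have ea : vdist G ℓ a y = vdist G ℓ y u + vdist G ℓ a u := by
    rw [vdist_symm hG.isConnected hℓnn hℓsym a y,
      vdist_split hG hℓnn hadj hin.1 hy, vdist_symm hG.isConnected hℓnn hℓsym u a]
  have eb : vdist G ℓ b y = vdist G ℓ y u + vdist G ℓ b u := by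
    rw [vdist_symm hG.isConnected hℓnn hℓsym b y,
      vdist_split hG hℓnn hadj hin.2 hy, vdist_symm hG.isConnected hℓnn hℓsym u b]
  unfold pdist
  rw [ea, eb,
    show s * ℓ a b + (vdist G ℓ y u + vdist G ℓ a u)
        = (s * ℓ a b + vdist G ℓ a u) + vdist G ℓ y u from by ring,
    show (1-s) * ℓ a b + (vdist G ℓ y u + vdist G ℓ b u)
        = ((1-s) * ℓ a b + vdist G ℓ b u) + vdist G ℓ y u from by ring,
    min_add_add_right]
  ring

end split

/-- `max_{z ∈ S} w(z)·d(x,z)` for the point `x = (a,b,s)`. -/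
noncomputable def sideSup {V : Type*} (G : SimpleGraph V) (ℓ : V → V → ℝ) (w : V → ℝ)
    (S : Set V) (a b : V) (s : ℝ) : ℝ :=
  sSup ((fun z => w z * pdist G ℓ a b s z) '' S)

/-- The weighted radius of the subtree on vertex set `S`. -/
noncomputable def radius {V : Type*} (G : SimpleGraph V) (ℓ : V → V → ℝ) (w : V → ℝ)
    (S : Set V) : ℝ :=
  sInf {x | ∃ a b s, IsPointOn G S a b s ∧ x = sideSup G ℓ w S a b s}

/-- `g(e)` for an edge `e = (u,v)`: the larger of the weighted radii of the two subtrees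
obtained by deleting `e`. -/
noncomputable def gval {V : Type*} (G : SimpleGraph V) (ℓ : V → V → ℝ) (w : V → ℝ)
    (u v : V) : ℝ :=
  max (radius G ℓ w (branch G v u)) (radius G ℓ w (branch G u v))

section glue
open SimpleGraph
variable {V : Type*} [Fintype V] [DecidableEq V] {G : SimpleGraph V} {ℓ : V → V → ℝ}
  {w : V → ℝ} {S : Set V}
  (hG : G.IsTree) (hw : ∀ v, 0 < w v)
  (hℓnn : ∀ u v, 0 ≤ ℓ u v) (hℓsym : ∀ u v, ℓ u v = ℓ v u)

lemma pointOn_bounds {a b : V} {s : ℝ} (hx : IsPointOn G S a b s) : 0 ≤ s ∧ s ≤ 1 := by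
  rcases hx.2.2 with ⟨_, hI⟩ | ⟨_, rfl⟩
  · exact ⟨hI.1, hI.2⟩
  · norm_num

lemma le_sideSup {a b z : V} {s : ℝ} (hz : z ∈ S) :
    w z * pdist G ℓ a b s z ≤ sideSup G ℓ w S a b s :=
  le_csSup ((S.toFinite.image _).bddAbove) ⟨z, hz, rfl⟩

lemma sideSup_le {a b : V} {s M : ℝ} (hS : S.Nonempty)
    (h : ∀ z ∈ S, w z * pdist G ℓ a b s z ≤ M) : sideSup G ℓ w S a b s ≤ M :=
  csSup_le (hS.image _) (by rintro x ⟨z, hz, rfl⟩; exact h z hz)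

include hG hw hℓnn

lemma sideSup_nonneg {a b : V} {s : ℝ} (hx : IsPointOn G S a b s) :
    0 ≤ sideSup G ℓ w S a b s := by
  obtain ⟨h0, h1⟩ := pointOn_bounds hx
  refine le_trans ?_ (le_sideSup (a := a) (b := b) (s := s) hx.1)
  exact mul_nonneg (hw a).le (pdist_nonneg hℓnn hG.isConnected h0 h1)

lemma radius_le_sideSup {a b : V} {s : ℝ} (hx : IsPointOn G S a b s) :
    radius G ℓ w S ≤ sideSup G ℓ w S a b s := by
  apply csInf_le
  · refine ⟨0, ?_⟩
    rintro x ⟨a', b', s', hf, rfl⟩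
    exact sideSup_nonneg hG hw hℓnn hf
  · exact ⟨a, b, s, hx, rfl⟩

omit hG hw hℓnn

lemma le_radius {M : ℝ} {a b : V} {s : ℝ} (hx : IsPointOn G S a b s)
    (h : ∀ a' b' s', IsPointOn G S a' b' s' → M ≤ sideSup G ℓ w S a' b' s') :
    M ≤ radius G ℓ w S :=
  le_csInf ⟨_, a, b, s, hx, rfl⟩ (by rintro x ⟨a', b', s', hf, rfl⟩; exact h a' b' s' hf)

end glue

section mainsec
open SimpleGraph
variable {V : Type*} [Fintype V] [DecidableEq V] [Nonempty V] {G : SimpleGraph V}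
  {ℓ : V → V → ℝ} {w : V → ℝ}
  (hG : G.IsTree) (hw : ∀ v, 0 < w v)
  (hℓnn : ∀ u v, 0 ≤ ℓ u v) (hℓsym : ∀ u v, ℓ u v = ℓ v u)

include hG hw hℓnn

lemma radius_le_sup {u v ga gb : V} {gs : ℝ} {F : V → ℝ}
    (hfeas : IsPointOn G (branch G v u) ga gb gs)
    (hdom : ∀ z ∈ branch G v u, w z * pdist G ℓ ga gb gs z ≤ F z) :
    radius G ℓ w (branch G v u) ≤ Finset.univ.sup' Finset.univ_nonempty F := by
  refine (radius_le_sideSup hG hw hℓnn hfeas).trans ?_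
  refine sideSup_le ⟨ga, hfeas.1⟩ (fun z hz => (hdom z hz).trans ?_)
  exact Finset.le_sup' F (Finset.mem_univ z)

lemma side_main {u v a b a' b' : V} {s s' : ℝ} (hadj : G.Adj u v)
    (hx1 : IsPointOn G Set.univ a b s) (hx2 : IsPointOn G Set.univ a' b' s')
    (hcase :
      (¬(a ∈ branch G v u ∧ b ∈ branch G v u) ∧ ¬(a' ∈ branch G v u ∧ b' ∈ branch G v u)) ∨
      ((a ∈ branch G v u ∧ b ∈ branch G v u) ∧ ¬(a' ∈ branch G v u ∧ b' ∈ branch G v u) ∧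
        pdist G ℓ a b s u ≤ pdist G ℓ a' b' s' u) ∨
      ((a' ∈ branch G v u ∧ b' ∈ branch G v u) ∧ ¬(a ∈ branch G v u ∧ b ∈ branch G v u) ∧
        pdist G ℓ a' b' s' u ≤ pdist G ℓ a b s u)) :
    radius G ℓ w (branch G v u) ≤ Finset.univ.sup' Finset.univ_nonempty
      (fun z => w z * min (pdist G ℓ a b s z) (pdist G ℓ a' b' s' z)) := by
  obtain ⟨h10, h11⟩ := pointOn_bounds hx1
  obtain ⟨h20, h21⟩ := pointOn_bounds hx2
  rcases hcase with ⟨hn1, hn2⟩ | ⟨hP1, hn2, hle⟩ | ⟨hP2, hn1, hle⟩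
  · refine radius_le_sup hG hw hℓnn (u := u) (v := v)
      (ga := u) (gb := u) (gs := 0) ⟨branch_self hadj.ne, branch_self hadj.ne,
        Or.inr ⟨rfl, rfl⟩⟩ (fun z hz => ?_)
    refine mul_le_mul_of_nonneg_left ?_ (hw z).le
    rw [pdist_vertex hℓnn hG.isConnected]
    exact le_min (pdist_gate hG hℓnn hadj hx1 hn1 hz h10 h11)
      (pdist_gate hG hℓnn hadj hx2 hn2 hz h20 h21)
  · refine radius_le_sup hG hw hℓnn (u := u) (v := v)
      (ga := a) (gb := b) (gs := s) ⟨hP1.1, hP1.2, hx1.2.2⟩ (fun z hz => ?_)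
    refine mul_le_mul_of_nonneg_left (le_min le_rfl ?_) (hw z).le
    rw [pdist_factor hG hℓnn hadj hx2 hn2 hz]
    exact (pdist_le_add hℓnn hG.isConnected a b s u z).trans
      (by linarith)
  · refine radius_le_sup hG hw hℓnn (u := u) (v := v)
      (ga := a') (gb := b') (gs := s') ⟨hP2.1, hP2.2, hx2.2.2⟩ (fun z hz => ?_)
    refine mul_le_mul_of_nonneg_left (le_min ?_ le_rfl) (hw z).le
    rw [pdist_factor hG hℓnn hadj hx1 hn1 hz]
    exact (pdist_le_add hℓnn hG.isConnected a' b' s' u z).trans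
      (by linarith)

/-- one-point version: if `x1` dominates pointwise. -/
lemma dominated_bound {u v a b a' b' : V} {s s' : ℝ} (hadj : G.Adj u v)
    (hx1 : IsPointOn G Set.univ a b s) (hx2 : IsPointOn G Set.univ a' b' s')
    (hall : ∀ z, pdist G ℓ a b s z ≤ pdist G ℓ a' b' s' z) :
    radius G ℓ w (branch G v u) ≤ Finset.univ.sup' Finset.univ_nonempty
      (fun z => w z * min (pdist G ℓ a b s z) (pdist G ℓ a' b' s' z)) := by
  obtain ⟨h10, h11⟩ := pointOn_bounds hx1
  by_cases hP1 : a ∈ branch G v u ∧ b ∈ branch G v u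
  · refine radius_le_sup hG hw hℓnn (u := u) (v := v)
      (ga := a) (gb := b) (gs := s) ⟨hP1.1, hP1.2, hx1.2.2⟩ (fun z hz => ?_)
    exact mul_le_mul_of_nonneg_left (le_min le_rfl (hall z)) (hw z).le
  · refine radius_le_sup hG hw hℓnn (u := u) (v := v)
      (ga := u) (gb := u) (gs := 0) ⟨branch_self hadj.ne, branch_self hadj.ne,
        Or.inr ⟨rfl, rfl⟩⟩ (fun z hz => ?_)
    refine mul_le_mul_of_nonneg_left ?_ (hw z).le
    rw [pdist_vertex hℓnn hG.isConnected]
    have hg := pdist_gate hG hℓnn hadj hx1 hP1 hz h10 h11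
    exact le_min hg (hg.trans (hall z))

omit hG hw hℓnn

lemma walk_ivt {h : V → ℝ} {α β : V} (p : G.Walk α β) (hα : h α ≤ 0) (hβ : 0 < h β) :
    ∃ u v, G.Adj u v ∧ h u ≤ 0 ∧ 0 ≤ h v ∧ u ∈ p.support ∧ v ∈ p.support := by
  induction p with
  | nil => linarith
  | @cons x y _ hadj q ih =>
    by_cases hy : h y ≤ 0
    · obtain ⟨u, v, h1, h2, h3, h4, h5⟩ := ih hy hβ
      exact ⟨u, v, h1, h2, h3, by simp [h4], by simp [h5]⟩
    · exact ⟨x, y, hadj, hα, (not_le.mp hy).le, by simp,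
        by simp [Walk.start_mem_support]⟩

end mainsec

/-- If the split edge `(u*,v*)` minimizes `g` over all edges, then the pair consisting of
a weighted 1-center of each side is a weighted 2-center of the tree. -/
theorem stmt15 {V : Type*} [Fintype V] [DecidableEq V] [Nonempty V]
    (G : SimpleGraph V) (hG : G.IsTree)
    (w : V → ℝ) (hw : ∀ v, 0 < w v)
    (ℓ : V → V → ℝ) (hℓsym : ∀ u v, ℓ u v = ℓ v u)
    (hℓpos : ∀ u v, G.Adj u v → 0 < ℓ u v) (hℓnn : ∀ u v, 0 ≤ ℓ u v)
    (ustar vstar : V) (hsplit : G.Adj ustar vstar)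
    (hopt : ∀ u v, G.Adj u v → gval G ℓ w ustar vstar ≤ gval G ℓ w u v)
    -- `(a₁, b₁, s₁)` is a weighted 1-center of the side of `u*`:
    (a₁ b₁ : V) (s₁ : ℝ) (hc₁ : IsPointOn G (branch G vstar ustar) a₁ b₁ s₁)
    (hc₁min : ∀ a b s, IsPointOn G (branch G vstar ustar) a b s →
      sideSup G ℓ w (branch G vstar ustar) a₁ b₁ s₁ ≤
        sideSup G ℓ w (branch G vstar ustar) a b s)
    -- `(a₂, b₂, s₂)` is a weighted 1-center of the side of `v*`:
    (a₂ b₂ : V) (s₂ : ℝ) (hc₂ : IsPointOn G (branch G ustar vstar) a₂ b₂ s₂)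
    (hc₂min : ∀ a b s, IsPointOn G (branch G ustar vstar) a b s →
      sideSup G ℓ w (branch G ustar vstar) a₂ b₂ s₂ ≤
        sideSup G ℓ w (branch G ustar vstar) a b s) :
    -- then `{c₁, c₂}` minimizes `S(X,T)` over all 2-point sets `X` of points of `T`:
    ∀ a b s a' b' s', IsPointOn G Set.univ a b s → IsPointOn G Set.univ a' b' s' →
      (Finset.univ.sup' Finset.univ_nonempty fun z =>
          w z * min (pdist G ℓ a₁ b₁ s₁ z) (pdist G ℓ a₂ b₂ s₂ z)) ≤
        Finset.univ.sup' Finset.univ_nonempty fun z =>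
          w z * min (pdist G ℓ a b s z) (pdist G ℓ a' b' s' z) := by
  intro a b s a' b' s' hx1 hx2
  -- Step 1: the value of the candidate pair is at most `gval ustar vstar`.
  have hrad1 : sideSup G ℓ w (branch G vstar ustar) a₁ b₁ s₁ ≤
      radius G ℓ w (branch G vstar ustar) :=
    le_radius hc₁ (fun p q r hf => hc₁min p q r hf)
  have hrad2 : sideSup G ℓ w (branch G ustar vstar) a₂ b₂ s₂ ≤
      radius G ℓ w (branch G ustar vstar) :=
    le_radius hc₂ (fun p q r hf => hc₂min p q r hf)
  have hLHS : (Finset.univ.sup' Finset.univ_nonempty fun z =>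
      w z * min (pdist G ℓ a₁ b₁ s₁ z) (pdist G ℓ a₂ b₂ s₂ z)) ≤
      gval G ℓ w ustar vstar := by
    apply Finset.sup'_le
    intro z _
    rcases branch_union hG hsplit z with hz | hz
    · have h1 : w z * min (pdist G ℓ a₁ b₁ s₁ z) (pdist G ℓ a₂ b₂ s₂ z) ≤
          w z * pdist G ℓ a₁ b₁ s₁ z :=
        mul_le_mul_of_nonneg_left (min_le_left _ _) (hw z).le
      have h2 := le_sideSup (G := G) (ℓ := ℓ) (w := w) (a := a₁) (b := b₁) (s := s₁) hz
      unfold gval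
      exact le_trans (h1.trans (h2.trans hrad1)) (le_max_left _ _)
    · have h1 : w z * min (pdist G ℓ a₁ b₁ s₁ z) (pdist G ℓ a₂ b₂ s₂ z) ≤
          w z * pdist G ℓ a₂ b₂ s₂ z :=
        mul_le_mul_of_nonneg_left (min_le_right _ _) (hw z).le
      have h2 := le_sideSup (G := G) (ℓ := ℓ) (w := w) (a := a₂) (b := b₂) (s := s₂) hz
      unfold gval
      exact le_trans (h1.trans (h2.trans hrad2)) (le_max_right _ _)
  refine hLHS.trans ?_
  -- Step 2: `gval ustar vstar` is at most the value of the arbitrary pair.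
  by_cases hall1 : ∀ z, pdist G ℓ a b s z ≤ pdist G ℓ a' b' s' z
  · have hU := dominated_bound hG hw hℓnn hsplit hx1 hx2 hall1
    have hV := dominated_bound hG hw hℓnn hsplit.symm hx1 hx2 hall1
    unfold gval
    exact max_le hU hV
  by_cases hall2 : ∀ z, pdist G ℓ a' b' s' z ≤ pdist G ℓ a b s z
  · have hswap : (Finset.univ.sup' Finset.univ_nonempty fun z =>
        w z * min (pdist G ℓ a' b' s' z) (pdist G ℓ a b s z)) =
        Finset.univ.sup' Finset.univ_nonempty fun z =>
        w z * min (pdist G ℓ a b s z) (pdist G ℓ a' b' s' z) := by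
      congr 1
      funext z
      rw [min_comm]
    have hU := dominated_bound hG hw hℓnn hsplit hx2 hx1 hall2
    have hV := dominated_bound hG hw hℓnn hsplit.symm hx2 hx1 hall2
    rw [hswap] at hU hV
    unfold gval
    exact max_le hU hV
  -- main case: both points "win" somewhere
  push_neg at hall1 hall2
  obtain ⟨β, hβ⟩ := hall1
  obtain ⟨α, hα⟩ := hall2
  obtain ⟨p0⟩ := hG.isConnected.preconnected α β
  have hpath : p0.bypass.IsPath := SimpleGraph.Walk.bypass_isPath p0
  obtain ⟨u, v, hadj, hu, hv, hus, hvs⟩ :=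
    walk_ivt (h := fun z => pdist G ℓ a b s z - pdist G ℓ a' b' s' z) p0.bypass
      (sub_nonpos.mpr hα.le) (sub_pos.mpr hβ)
  replace hu : pdist G ℓ a b s u - pdist G ℓ a' b' s' u ≤ 0 := hu
  replace hv : 0 ≤ pdist G ℓ a b s v - pdist G ℓ a' b' s' v := hv
  -- exclusion: not both points strictly inside the u-side
  have hnUU : ¬((a ∈ branch G v u ∧ b ∈ branch G v u) ∧
      (a' ∈ branch G v u ∧ b' ∈ branch G v u)) := by
    rintro ⟨h1, h2⟩
    have e1 := pdist_out hG hℓnn hℓsym (s := s) hadj h1 (branch_not_self u v)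
    have e2 := pdist_out hG hℓnn hℓsym (s := s') hadj h2 (branch_not_self u v)
    have hu0 : pdist G ℓ a b s u - pdist G ℓ a' b' s' u = 0 := by
      rw [e1, e2] at hv; linarith
    have hW : ∀ y, y ∈ branch G u v →
        pdist G ℓ a b s y - pdist G ℓ a' b' s' y = 0 := by
      intro y hy
      have hyU : y ∉ branch G v u := fun hyU => branch_disjoint hG hadj hyU hy
      rw [pdist_out hG hℓnn hℓsym (s := s) hadj h1 hyU,
        pdist_out hG hℓnn hℓsym (s := s') hadj h2 hyU]
      linarith
    have hαU : α ∈ branch G v u := by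
      rcases branch_union hG hadj α with h | h
      · exact h
      · exact absurd (hW α h) (by linarith)
    have hβU : β ∈ branch G v u := by
      rcases branch_union hG hadj β with h | h
      · exact h
      · exact absurd (hW β h) (by linarith)
    exact branch_path_avoid hG hαU hβU p0.bypass hpath hvs
  -- exclusion: not both points strictly inside the v-side
  have hnWW : ¬((a ∈ branch G u v ∧ b ∈ branch G u v) ∧
      (a' ∈ branch G u v ∧ b' ∈ branch G u v)) := by
    rintro ⟨h1, h2⟩
    have e1 := pdist_out hG hℓnn hℓsym (s := s) hadj.symm h1 (branch_not_self v u)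
    have e2 := pdist_out hG hℓnn hℓsym (s := s') hadj.symm h2 (branch_not_self v u)
    have hv0 : pdist G ℓ a b s v - pdist G ℓ a' b' s' v = 0 := by
      rw [e1, e2] at hu; linarith
    have hW : ∀ y, y ∈ branch G v u →
        pdist G ℓ a b s y - pdist G ℓ a' b' s' y = 0 := by
      intro y hy
      have hyU : y ∉ branch G u v := fun hyU => branch_disjoint hG hadj hy hyU
      rw [pdist_out hG hℓnn hℓsym (s := s) hadj.symm h1 hyU,
        pdist_out hG hℓnn hℓsym (s := s') hadj.symm h2 hyU]
      linarith
    have hαU : α ∈ branch G u v := by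
      rcases branch_union hG hadj α with h | h
      · exact absurd (hW α h) (by linarith)
      · exact h
    have hβU : β ∈ branch G u v := by
      rcases branch_union hG hadj β with h | h
      · exact absurd (hW β h) (by linarith)
      · exact h
    exact branch_path_avoid hG hαU hβU p0.bypass hpath hus
  have hsymuv := vdist_symm hG.isConnected hℓnn hℓsym u v
  -- bound for the u-side
  have hUb : radius G ℓ w (branch G v u) ≤ Finset.univ.sup' Finset.univ_nonempty
      fun z => w z * min (pdist G ℓ a b s z) (pdist G ℓ a' b' s' z) := by
    apply side_main hG hw hℓnn hadj hx1 hx2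
    by_cases hP1 : a ∈ branch G v u ∧ b ∈ branch G v u <;>
      by_cases hP2 : a' ∈ branch G v u ∧ b' ∈ branch G v u
    · exact absurd ⟨hP1, hP2⟩ hnUU
    · exact Or.inr (Or.inl ⟨hP1, hP2, by linarith⟩)
    · refine Or.inr (Or.inr ⟨hP2, hP1, ?_⟩)
      have e2 := pdist_out hG hℓnn hℓsym (s := s') hadj hP2 (branch_not_self u v)
      have e1 := pdist_le_add hℓnn hG.isConnected a b s u v
      rw [e2] at hv
      linarith
    · exact Or.inl ⟨hP1, hP2⟩
  -- bound for the v-side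
  have hVb : radius G ℓ w (branch G u v) ≤ Finset.univ.sup' Finset.univ_nonempty
      fun z => w z * min (pdist G ℓ a b s z) (pdist G ℓ a' b' s' z) := by
    apply side_main hG hw hℓnn hadj.symm hx1 hx2
    by_cases hP1 : a ∈ branch G u v ∧ b ∈ branch G u v <;>
      by_cases hP2 : a' ∈ branch G u v ∧ b' ∈ branch G u v
    · exact absurd ⟨hP1, hP2⟩ hnWW
    · refine Or.inr (Or.inl ⟨hP1, hP2, ?_⟩)
      have e1 := pdist_out hG hℓnn hℓsym (s := s) hadj.symm hP1 (branch_not_self v u)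
      have e2 := pdist_le_add hℓnn hG.isConnected a' b' s' v u
      rw [e1] at hu
      linarith
    · exact Or.inr (Or.inr ⟨hP2, hP1, by linarith⟩)
    · exact Or.inl ⟨hP1, hP2⟩
  calc gval G ℓ w ustar vstar ≤ gval G ℓ w u v := hopt u v hadj
    _ ≤ _ := by unfold gval; exact max_le hUb hVb
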